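/- For every n ∈ ℕ, LPO^[n] <_W LPO^[n+1] (i.e., LPO^[n] ≤_W LPO^[n+1] and LPO^[n+1] is not Weihrauch reducible to LPO^[n]); moreover the same holds for continuous Weihrauch reducibility: LPO^[n] <*_W LPO^[n+1]. -/

import Mathlib

/-- Baire space. -/
abbrev Baire := ℕ → ℕ

/-- A problem: a partial multivalued function on Baire space, given as the
solution-set map; the domain is the set of instances with nonempty solution set. -/
def Problem := Baire → Set Baire

/-- Domain of a problem. -/
def Dom (f : Problem) : Set Baire := {x | (f x).Nonempty}

/-- A standard computable pairing of two sequences (interleaving). -/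
def pair (x y : Baire) : Baire := fun n => if n % 2 = 0 then x (n / 2) else y (n / 2)

/-- Initial segment of length `m` of a sequence. -/
def initSeg (x : Baire) (m : ℕ) : List ℕ := (List.range m).map x

/-- `F` is (the restriction to `D` of) a partial computable function on Baire space:
there is a computable monotone oracle functional computing `F x` from prefixes of `x`,
correctly and consistently, for every `x ∈ D`. -/
def ComputableOn (F : Baire → Baire) (D : Set Baire) : Prop :=
  ∃ φ : List ℕ → ℕ → Option ℕ, Computable₂ φ ∧
    ∀ x ∈ D, ∀ n : ℕ,
      (∃ m, φ (initSeg x m) n = some (F x n)) ∧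
      (∀ m v, φ (initSeg x m) n = some v → v = F x n)

/-- Weihrauch reducibility `f ≤_W g`, with the partial computable forward functional `k`
defined on `Dom f` and the partial computable backward functional `h` defined on all
pairs `⟨x, y⟩` with `x ∈ Dom f` and `y` a `g`-solution of `k x`. -/
def WRed (f g : Problem) : Prop :=
  ∃ h k : Baire → Baire,
    ComputableOn k (Dom f) ∧
    ComputableOn h {p | ∃ x ∈ Dom f, ∃ y ∈ g (k x), p = pair x y} ∧
    ∀ x ∈ Dom f, k x ∈ Dom g ∧ ∀ y ∈ g (k x), h (pair x y) ∈ f x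

/-- Weihrauch equivalence. -/
def WEquiv (f g : Problem) : Prop := WRed f g ∧ WRed g f

/-- Continuous Weihrauch reducibility `f ≤*_W g`: as `WRed` but the functionals
need only be partial continuous (continuous on their domains, Baire space carrying
the product topology). -/
def ContWRed (f g : Problem) : Prop :=
  ∃ h k : Baire → Baire,
    ContinuousOn k (Dom f) ∧
    ContinuousOn h {p | ∃ x ∈ Dom f, ∃ y ∈ g (k x), p = pair x y} ∧
    ∀ x ∈ Dom f, k x ∈ Dom g ∧ ∀ y ∈ g (k x), h (pair x y) ∈ f x

/-- Continuous Weihrauch equivalence. -/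
def ContWEquiv (f g : Problem) : Prop := ContWRed f g ∧ ContWRed g f

/-- Composition of problems: `dom (f ∘ g) = {x ∈ dom g : g x ⊆ dom f}` and
`(f ∘ g) x = {z : ∃ y ∈ g x, z ∈ f y}`. -/
def pcomp (f g : Problem) : Problem :=
  fun x => {z | g x ⊆ Dom f ∧ ∃ y ∈ g x, z ∈ f y}

/-- The identity problem. -/
def idp : Problem := fun x => {x}

/-- `p` is (a representative of) the compositional product `f * g`: the maximum,
with respect to `≤_W`, of `{f' ∘ g' : f' ≤_W f, g' ≤_W g}`. -/
def IsCompProd (f g p : Problem) : Prop :=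
  (∃ f' g', WRed f' f ∧ WRed g' g ∧ WEquiv p (pcomp f' g')) ∧
  (∀ f' g', WRed f' f → WRed g' g → WRed (pcomp f' g') p)

/-- `IsIter f n p` : `p` is (a representative of) `f^[n]`, the compositional product of
`n` copies of `f`, with `f^[0] := id`. -/
def IsIter (f : Problem) : ℕ → Problem → Prop
  | 0, p => p = idp
  | n + 1, p => ∃ q, IsIter f n q ∧ IsCompProd f q p

/-- The constant sequence with value `n`. -/
def cseq (n : ℕ) : Baire := fun _ => n

/-- The limited principle of omniscience. -/
def LPO : Problem := fun x =>
  {y | ((∃ n, x n = 0) ∧ y = cseq 0) ∨ ((∀ n, x n ≠ 0) ∧ y = cseq 1)}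

/-- The lesser limited principle of omniscience. -/
def LLPO : Problem := fun x =>
  {y | (∀ i j, x i ≠ 0 → x j ≠ 0 → i = j) ∧
       ((y = cseq 0 ∧ ∀ i, Even i → x i = 0) ∨
        (y = cseq 1 ∧ ∀ i, Odd i → x i = 0))}

/-- Turing reducibility between points of Baire space: `x` is computable from
oracle `y`. -/
def TuringLE (x y : Baire) : Prop :=
  ∃ φ : List ℕ → ℕ → Option ℕ, Computable₂ φ ∧
    ∀ n : ℕ, (∃ m, φ (initSeg y m) n = some (x n)) ∧
      (∀ m v, φ (initSeg y m) n = some v → v = x n)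

/-- Mutual Turing reducibility: `x` and `y` have the same Turing degree. -/
def TuringEquiv (x y : Baire) : Prop := TuringLE x y ∧ TuringLE y x

/-- Strict Turing reducibility. -/
def TuringLT (x y : Baire) : Prop := TuringLE x y ∧ ¬ TuringLE y x

/-- The problem `w_a`, for `a` a representative of a (non-zero) Turing degree. -/
def w (a : Baire) : Problem := fun x =>
  {y | (Computable x ∧ ¬ Computable y) ∨ (¬ Computable x ∧ TuringEquiv y a)}

/-- `k`-weak continuity of a problem. -/
def WeaklyContinuous (k : ℕ) (f : Problem) : Prop :=
  ∀ x ∈ Dom f, ∀ y : ℕ → Baire, (∀ n, y n ∈ Dom f) →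
    Filter.Tendsto y Filter.atTop (nhds x) →
    ∃ u ∈ f x, ∀ l < k, ∀ m : ℕ, ∃ n ≥ m,
      ∃ v ∈ f (y (n * k + l)), initSeg u m = initSeg v m

/-- Product of two problems. -/
def prodP (f g : Problem) : Problem := fun z =>
  {w | ∃ x y u v, z = pair x y ∧ w = pair u v ∧ u ∈ f x ∧ v ∈ g y}

/-- `powP f n` : the product of `n` copies of `f` (for `n ≥ 1`). -/
def powP (f : Problem) : ℕ → Problem
  | 0 => idp
  | 1 => f
  | n + 2 => prodP f (powP f (n + 1))

/-- A problem `f` is `k`-continuous: it has a realizer `r` (defined on a domain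
`D ⊇ Dom f`) together with a partition of `D` into at most `k` pieces (given by a
coloring `c`) such that `r` is continuous on each piece. -/
def kContinuous (k : ℕ) (f : Problem) : Prop :=
  ∃ (D : Set Baire) (r : Baire → Baire) (c : Baire → Fin k),
    Dom f ⊆ D ∧ (∀ x ∈ Dom f, r x ∈ f x) ∧
    ∀ i : Fin k, ContinuousOn r {x ∈ D | c x = i}

-- Chunk 1: basic lemmas
open Classical in
noncomputable def valP (P : ℕ → Prop) (m : ℕ) : ℕ := Nat.findGreatest P m

section Basics

lemma pair_even (x y : Baire) (n : ℕ) : pair x y (2 * n) = x n := by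
  simp [pair, Nat.mul_mod_right, Nat.mul_div_cancel_left _ (by norm_num : (0:ℕ) < 2)]

lemma pair_odd (x y : Baire) (n : ℕ) : pair x y (2 * n + 1) = y n := by
  have h1 : (2 * n + 1) % 2 = 1 := by omega
  have h2 : (2 * n + 1) / 2 = n := by omega
  simp [pair, h1, h2]

def proj1 (p : Baire) : Baire := fun n => p (2 * n)
def proj2 (p : Baire) : Baire := fun n => p (2 * n + 1)

@[simp] lemma proj1_pair (x y : Baire) : proj1 (pair x y) = x := by
  funext n; simp [proj1, pair_even]

@[simp] lemma proj2_pair (x y : Baire) : proj2 (pair x y) = y := by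
  funext n; simp [proj2, pair_odd]

lemma initSeg_length (x : Baire) (m : ℕ) : (initSeg x m).length = m := by
  simp [initSeg]

lemma initSeg_get? (x : Baire) {i m : ℕ} (h : i < m) :
    (initSeg x m)[i]? = some (x i) := by
  simp [initSeg, h]

lemma initSeg_getD (x : Baire) {i m : ℕ} (h : i < m) (d : ℕ) :
    (initSeg x m).getD i d = x i := by
  simp [List.getD_eq_getElem?_getD, initSeg_get? x h]

lemma initSeg_succ_right (x : Baire) (m : ℕ) :
    initSeg x (m + 1) = initSeg x m ++ [x m] := by
  simp [initSeg, List.range_succ]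

lemma initSeg_succ_left (x : Baire) (m : ℕ) :
    initSeg x (m + 1) = x 0 :: initSeg (fun n => x (n + 1)) m := by
  simp [initSeg, List.range_succ_eq_map, List.map_map]

lemma initSeg_congr {x y : Baire} {m : ℕ} (h : ∀ i < m, y i = x i) :
    initSeg y m = initSeg x m := by
  simp only [initSeg]
  exact List.map_congr_left fun i hi => h i (List.mem_range.mp hi)

/-- prefix extraction used instead of List.take -/
def pfx (l : List ℕ) (i : ℕ) : List ℕ := (List.range (min i l.length)).map (fun j => l.getD j 0)

lemma pfx_initSeg (x : Baire) (m i : ℕ) : pfx (initSeg x m) i = initSeg x (min i m) := by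
  unfold pfx
  rw [initSeg_length]
  apply List.map_congr_left
  intro j hj
  exact initSeg_getD x (lt_of_lt_of_le (List.mem_range.mp hj) (min_le_right _ _)) 0

end Basics

section Cyl

def cyl (x : Baire) (N : ℕ) : Set Baire := {y | ∀ i < N, y i = x i}

lemma isOpen_cyl (x : Baire) (N : ℕ) : IsOpen (cyl x N) := by
  have : cyl x N = ⋂ i ∈ Finset.range N, {y : Baire | y i = x i} := by
    ext y; simp [cyl, Set.mem_iInter]
  rw [this]
  apply isOpen_biInter_finset
  intro i _
  have : IsOpen ((fun y : Baire => y i) ⁻¹' ({x i} : Set ℕ)) :=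
    (isOpen_discrete _).preimage (continuous_apply i)
  exact this

lemma self_mem_cyl (x : Baire) (N : ℕ) : x ∈ cyl x N := fun _ _ => rfl

lemma cyl_mem_nhds (x : Baire) (N : ℕ) : cyl x N ∈ nhds x :=
  (isOpen_cyl x N).mem_nhds (self_mem_cyl x N)

lemma exists_cyl_subset {x : Baire} {S : Set Baire} (hS : S ∈ nhds x) :
    ∃ N, cyl x N ⊆ S := by
  rw [nhds_pi, Filter.mem_pi] at hS
  obtain ⟨I, hIfin, t, ht, hsub⟩ := hS
  obtain ⟨N, hN⟩ := hIfin.bddAbove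
  refine ⟨N + 1, fun y hy => hsub ?_⟩
  intro i hi
  have : y i = x i := hy i (Nat.lt_succ_of_le (hN hi))
  rw [this]
  have := ht i
  rwa [nhds_discrete, Filter.mem_pure] at this
end Cyl
section CompOn

lemma initSeg_get?_ge (x : Baire) {i m : ℕ} (h : m ≤ i) : (initSeg x m)[i]? = none := by
  rw [List.getElem?_eq_none_iff]
  rw [initSeg_length]; exact h

lemma ComputableOn.mono {F : Baire → Baire} {D D' : Set Baire}
    (h : ComputableOn F D) (hsub : D' ⊆ D) : ComputableOn F D' := by
  obtain ⟨φ, hφ, hc⟩ := h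
  exact ⟨φ, hφ, fun x hx => hc x (hsub hx)⟩

lemma ComputableOn.congr {F G : Baire → Baire} {D : Set Baire}
    (h : ComputableOn F D) (heq : ∀ x ∈ D, G x = F x) : ComputableOn G D := by
  obtain ⟨φ, hφ, hc⟩ := h
  refine ⟨φ, hφ, fun x hx n => ?_⟩
  rw [heq x hx]
  exact hc x hx n

lemma computableOn_id (D : Set Baire) : ComputableOn (fun x => x) D := by
  refine ⟨fun σ n => σ[n]?, Primrec.list_getElem?.to_comp, fun x _ n => ⟨⟨n + 1, ?_⟩, ?_⟩⟩
  · exact initSeg_get? x (Nat.lt_succ_self n)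
  · intro m v hv
    dsimp only at hv
    rcases lt_or_ge n m with h | h
    · rw [initSeg_get? x h] at hv; exact (Option.some_inj.mp hv).symm
    · rw [initSeg_get?_ge x h] at hv; exact absurd hv (by simp)

lemma computableOn_const (c : ℕ) (D : Set Baire) : ComputableOn (fun _ => cseq c) D :=
  ⟨fun _ _ => some c, Computable.const _, fun x _ n => ⟨⟨0, rfl⟩, fun m v hv => (Option.some_inj.mp hv).symm⟩⟩

lemma computableOn_proj1 (D : Set Baire) : ComputableOn proj1 D := by
  refine ⟨fun σ n => σ[2 * n]?,
    (Primrec.list_getElem?.comp Primrec.fst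
      ((Primrec.nat_mul).comp (Primrec.const 2) Primrec.snd)).to_comp,
    fun x _ n => ⟨⟨2 * n + 1, ?_⟩, ?_⟩⟩
  · exact initSeg_get? x (Nat.lt_succ_self _)
  · intro m v hv
    dsimp only at hv
    show v = x (2 * n)
    rcases lt_or_ge (2 * n) m with h | h
    · rw [initSeg_get? x h] at hv; exact (Option.some_inj.mp hv).symm
    · rw [initSeg_get?_ge x h] at hv; exact absurd hv (by simp)

lemma computableOn_proj2 (D : Set Baire) : ComputableOn proj2 D := by
  refine ⟨fun σ n => σ[2 * n + 1]?,
    (Primrec.list_getElem?.comp Primrec.fst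
      (Primrec.succ.comp ((Primrec.nat_mul).comp (Primrec.const 2) Primrec.snd))).to_comp,
    fun x _ n => ⟨⟨2 * n + 2, ?_⟩, ?_⟩⟩
  · exact initSeg_get? x (Nat.lt_succ_self _)
  · intro m v hv
    dsimp only at hv
    show v = x (2 * n + 1)
    rcases lt_or_ge (2 * n + 1) m with h | h
    · rw [initSeg_get? x h] at hv; exact (Option.some_inj.mp hv).symm
    · rw [initSeg_get?_ge x h] at hv; exact absurd hv (by simp)

lemma ComputableOn.pairF {F G : Baire → Baire} {D : Set Baire}
    (hF : ComputableOn F D) (hG : ComputableOn G D) :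
    ComputableOn (fun x => pair (F x) (G x)) D := by
  obtain ⟨φ1, hφ1, hc1⟩ := hF
  obtain ⟨φ2, hφ2, hc2⟩ := hG
  refine ⟨fun σ n => if n % 2 = 0 then φ1 σ (n / 2) else φ2 σ (n / 2), ?_, ?_⟩
  · have hc : Computable fun p : List ℕ × ℕ => decide (p.2 % 2 = 0) :=
      (Primrec.eq.comp (Primrec.nat_mod.comp Primrec.snd (Primrec.const 2))
        (Primrec.const 0)).decide.to_comp
    have hdiv : Computable fun p : List ℕ × ℕ => p.2 / 2 :=
      (Primrec.nat_div.comp Primrec.snd (Primrec.const 2)).to_comp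
    have h1 : Computable fun p : List ℕ × ℕ => φ1 p.1 (p.2 / 2) :=
      hφ1.comp Computable.fst hdiv
    have h2 : Computable fun p : List ℕ × ℕ => φ2 p.1 (p.2 / 2) :=
      hφ2.comp Computable.fst hdiv
    exact (Computable.cond hc h1 h2).of_eq fun p => by
      by_cases h : p.2 % 2 = 0 <;> simp [h]
  · intro x hx n
    by_cases h : n % 2 = 0
    · have e : pair (F x) (G x) n = F x (n / 2) := by simp [pair, h]
      simp only [h, if_true, e]
      exact hc1 x hx (n / 2)
    · have e : pair (F x) (G x) n = G x (n / 2) := by simp [pair, h]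
      simp only [h, if_false, e]
      exact hc2 x hx (n / 2)

lemma ComputableOn.continuousOn {F : Baire → Baire} {D : Set Baire}
    (h : ComputableOn F D) : ContinuousOn F D := by
  obtain ⟨φ, hφ, hc⟩ := h
  intro x hx
  rw [continuousWithinAt_pi]
  intro n
  obtain ⟨⟨m, hm⟩, hcons⟩ := hc x hx n
  have key : ∀ y ∈ cyl x m ∩ D, F y n = F x n := by
    rintro y ⟨hy1, hy2⟩
    have : initSeg y m = initSeg x m := initSeg_congr hy1
    have h2 := (hc y hy2 n).2 m (F x n) (by rw [this]; exact hm)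
    exact h2.symm
  have hmem : cyl x m ∩ D ∈ nhdsWithin x D :=
    Filter.inter_mem (mem_nhdsWithin_of_mem_nhds (cyl_mem_nhds x m)) self_mem_nhdsWithin
  have : Filter.Tendsto (fun y => F y n) (nhdsWithin x D) (pure (F x n)) := by
    rw [Filter.tendsto_pure]
    exact Filter.eventually_of_mem hmem key
  unfold ContinuousWithinAt
  rw [nhds_discrete]
  exact this

end CompOn
section Comp

def fstSome (l : List (Option ℕ)) : Option ℕ :=
  l.foldr (fun a acc => Option.casesOn a acc some) none

@[simp] lemma fstSome_nil : fstSome [] = none := rfl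
@[simp] lemma fstSome_cons (a : Option ℕ) (l : List (Option ℕ)) :
    fstSome (a :: l) = Option.casesOn a (fstSome l) some := rfl

lemma fstSome_eq_some_mem {l : List (Option ℕ)} {v : ℕ} (h : fstSome l = some v) :
    some v ∈ l := by
  induction l with
  | nil => simp at h
  | cons a l ih =>
    cases a with
    | none =>
      rw [fstSome_cons] at h
      exact List.mem_cons_of_mem _ (ih h)
    | some w =>
      rw [fstSome_cons] at h
      have : w = v := by simpa using h
      subst this
      exact List.mem_cons_self

lemma fstSome_isSome {l : List (Option ℕ)} {v : ℕ} (h : some v ∈ l) :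
    ∃ w, fstSome l = some w := by
  induction l with
  | nil => simp at h
  | cons a l ih =>
    cases a with
    | none => simp at h; exact ih (by simpa using h)
    | some w => exact ⟨w, rfl⟩

lemma primrec_fstSome : Primrec fstSome := by
  have h : Primrec₂ fun (_ : List (Option ℕ)) (p : Option ℕ × Option ℕ) =>
      Option.casesOn (motive := fun _ => Option ℕ) p.1 p.2 some := by
    apply Primrec.option_casesOn (Primrec.fst.comp Primrec.snd) (Primrec.snd.comp Primrec.snd)
    exact (Primrec.option_some.comp Primrec.snd).to₂
  exact (Primrec.list_foldr Primrec.id (Primrec.const none) h).of_eq fun l => rfl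

def tws (l : List (Option ℕ)) : List ℕ :=
  l.foldr (fun a acc => Option.casesOn a [] (fun v => v :: acc)) []

@[simp] lemma tws_nil : tws [] = [] := rfl
@[simp] lemma tws_cons (a : Option ℕ) (l : List (Option ℕ)) :
    tws (a :: l) = Option.casesOn a [] (fun v => v :: tws l) := rfl

lemma primrec_tws : Primrec tws := by
  have h : Primrec₂ fun (_ : List (Option ℕ)) (p : Option ℕ × List ℕ) =>
      Option.casesOn (motive := fun _ => List ℕ) p.1 [] (fun v => v :: p.2) := by
    apply Primrec.option_casesOn (Primrec.fst.comp Primrec.snd) (Primrec.const [])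
    exact (Primrec.list_cons.comp Primrec.snd ((Primrec.snd.comp Primrec.snd).comp Primrec.fst)).to₂
  exact (Primrec.list_foldr Primrec.id (Primrec.const []) h).of_eq fun l => rfl

lemma primrec_pfx : Primrec₂ pfx := by
  have h1 : Primrec fun p : List ℕ × ℕ => List.range (min p.2 p.1.length) :=
    Primrec.list_range.comp (Primrec.nat_min.comp Primrec.snd
      (Primrec.list_length.comp Primrec.fst))
  have h2 : Primrec₂ fun (p : List ℕ × ℕ) (j : ℕ) => p.1.getD j 0 :=
    ((Primrec.list_getD 0).comp (Primrec.fst.comp Primrec.fst) Primrec.snd).to₂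
  exact (Primrec.list_map h1 h2).to₂

lemma computable_mapRange {α : Type*} [Primcodable α] {u : α → ℕ → Option ℕ}
    (hu : Computable₂ u) :
    Computable₂ fun (a : α) (N : ℕ) => (List.range N).map (u a) := by
  have hh : Computable₂ fun (p : α × ℕ) (q : ℕ × List (Option ℕ)) => q.2 ++ [u p.1 q.1] := by
    exact (Primrec.list_concat.to_comp.comp
      (Computable.snd.comp Computable.snd)
      (hu.comp (Computable.fst.comp Computable.fst) (Computable.fst.comp Computable.snd))).to₂
  have := Computable.nat_rec (f := fun p : α × ℕ => p.2) (g := fun _ => ([] : List (Option ℕ)))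
    (h := fun (p : α × ℕ) (q : ℕ × List (Option ℕ)) => q.2 ++ [u p.1 q.1])
    Computable.snd (Computable.const _) hh
  refine this.of_eq fun p => ?_
  obtain ⟨a, N⟩ := p
  dsimp only
  induction N with
  | zero => rfl
  | succ N ih =>
    rw [List.range_succ, List.map_append, ← ih]
    rfl

lemma tws_map_range (g : ℕ → Option ℕ) (y : Baire) (N : ℕ)
    (hcons : ∀ j v, g j = some v → v = y j) :
    ∃ t, t ≤ N ∧ tws ((List.range N).map g) = initSeg y t ∧
      (∀ j < N, (∀ i ≤ j, (g i).isSome) → j < t) := by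
  induction N generalizing g y with
  | zero => exact ⟨0, le_refl _, rfl, by omega⟩
  | succ N ih =>
    rw [List.range_succ_eq_map, List.map_cons, List.map_map, tws_cons]
    cases h0 : g 0 with
    | none =>
      refine ⟨0, by omega, rfl, ?_⟩
      intro j _ hall
      have := hall 0 (Nat.zero_le j)
      rw [h0] at this; simp at this
    | some v =>
      have hv : v = y 0 := hcons 0 v h0
      obtain ⟨t', ht'N, htws, hlb⟩ := ih (g ∘ Nat.succ) (fun n => y (n + 1))
        (fun j w hw => hcons (j + 1) w hw)
      refine ⟨t' + 1, by omega, ?_, ?_⟩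
      · simp only [htws, hv, initSeg_succ_left]
      · intro j hj hall
        cases j with
        | zero => omega
        | succ j' =>
          have := hlb j' (by omega) (fun i hi => hall (i + 1) (by omega))
          omega

lemma exists_uniform_bound {P : ℕ → ℕ → Prop} (m2 : ℕ) (h : ∀ j < m2, ∃ m, P j m) :
    ∃ M, ∀ j < m2, ∃ m ≤ M, P j m := by
  induction m2 with
  | zero => exact ⟨0, by omega⟩
  | succ k ih =>
    obtain ⟨M, hM⟩ := ih (fun j hj => h j (by omega))
    obtain ⟨mk, hmk⟩ := h k (by omega)
    refine ⟨max M mk, fun j hj => ?_⟩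
    rcases lt_or_ge j k with h' | h'
    · obtain ⟨m, hm1, hm2⟩ := hM j h'
      exact ⟨m, le_trans hm1 (le_max_left _ _), hm2⟩
    · have : j = k := by omega
      subst this
      exact ⟨mk, le_max_right _ _, hmk⟩

lemma ComputableOn.compF {F G : Baire → Baire} {A B : Set Baire}
    (hF : ComputableOn F A) (hG : ComputableOn G B) (hmap : ∀ x ∈ B, G x ∈ A) :
    ComputableOn (fun x => F (G x)) B := by
  obtain ⟨φ2, hφ2, hc2⟩ := hF
  obtain ⟨φ1, hφ1, hc1⟩ := hG
  classical
  set fs : List ℕ → ℕ → Option ℕ :=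
    fun σ j => fstSome ((List.range (σ.length + 1)).map (fun i => φ1 (pfx σ i) j)) with hfs
  set τ : List ℕ → List ℕ :=
    fun σ => tws ((List.range (σ.length + 1)).map (fun j => fs σ j)) with hτ
  set ψ : List ℕ → ℕ → Option ℕ :=
    fun σ n => fstSome ((List.range ((τ σ).length + 1)).map (fun i => φ2 (pfx (τ σ) i) n))
    with hψ
  have cinner : Computable₂ fun (p : List ℕ × ℕ) (i : ℕ) => φ1 (pfx p.1 i) p.2 :=
    (hφ1.comp (primrec_pfx.to_comp.comp (Computable.fst.comp Computable.fst) Computable.snd)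
      (Computable.snd.comp Computable.fst)).to₂
  have clen : Computable fun p : List ℕ × ℕ => p.1.length + 1 :=
    (Primrec.succ.comp (Primrec.list_length.comp Primrec.fst)).to_comp
  have cfs : Computable₂ fs :=
    (primrec_fstSome.to_comp.comp ((computable_mapRange cinner).comp Computable.id clen)).to₂
  have cτ : Computable τ := by
    have clen1 : Computable fun σ : List ℕ => σ.length + 1 :=
      (Primrec.succ.comp Primrec.list_length).to_comp
    have : Computable₂ fun (σ : List ℕ) (j : ℕ) => fs σ j := cfs
    exact primrec_tws.to_comp.comp ((computable_mapRange this).comp Computable.id clen1)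
  have cinner2 : Computable₂ fun (p : List ℕ × ℕ) (i : ℕ) => φ2 (pfx (τ p.1) i) p.2 :=
    (hφ2.comp (primrec_pfx.to_comp.comp ((cτ.comp Computable.fst).comp Computable.fst)
      Computable.snd) (Computable.snd.comp Computable.fst)).to₂
  have cψ : Computable₂ ψ := by
    have clen2 : Computable fun p : List ℕ × ℕ => (τ p.1).length + 1 :=
      (Primrec.succ.comp Primrec.list_length).to_comp.comp (cτ.comp Computable.fst)
    exact (primrec_fstSome.to_comp.comp
      ((computable_mapRange cinner2).comp Computable.id clen2)).to₂
  refine ⟨ψ, cψ, fun x hx n => ?_⟩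
  have hGA : G x ∈ A := hmap x hx
  -- consistency of fs
  have claimA : ∀ m j v, fs (initSeg x m) j = some v → v = G x j := by
    intro m j v hv
    rw [hfs] at hv
    have hmem := fstSome_eq_some_mem hv
    rw [List.mem_map] at hmem
    obtain ⟨i, _, hi⟩ := hmem
    rw [pfx_initSeg] at hi
    exact (hc1 x hx j).2 _ v hi
  -- τ structure
  have claimB : ∀ m, ∃ t, τ (initSeg x m) = initSeg (G x) t ∧
      (∀ j < m + 1, (∀ i ≤ j, (fs (initSeg x m) i).isSome) → j < t) := by
    intro m
    obtain ⟨t, _, htws, hlb⟩ := tws_map_range (fun j => fs (initSeg x m) j) (G x) (m + 1)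
      (fun j v hv => claimA m j v hv)
    simp only [hτ, initSeg_length]
    exact ⟨t, htws, hlb⟩
  constructor
  · -- existence
    obtain ⟨m2, hm2⟩ := (hc2 (G x) hGA n).1
    obtain ⟨M, hM⟩ := exists_uniform_bound (P := fun j m => φ1 (initSeg x m) j = some (G x j))
      m2 (fun j _ => (hc1 x hx j).1)
    set m := M + m2 + 1 with hm
    refine ⟨m, ?_⟩
    have hsome : ∀ j < m2, (fs (initSeg x m) j).isSome := by
      intro j hj
      obtain ⟨mj, hmjM, hmj⟩ := hM j hj
      have hmem : some (G x j) ∈ (List.range ((initSeg x m).length + 1)).map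
          (fun i => φ1 (pfx (initSeg x m) i) j) := by
        rw [List.mem_map]
        refine ⟨mj, ?_, ?_⟩
        · rw [List.mem_range, initSeg_length]; omega
        · rw [pfx_initSeg, min_eq_left (by omega : mj ≤ m)]
          exact hmj
      obtain ⟨w, hw⟩ := fstSome_isSome hmem
      have hws : fs (initSeg x m) j = some w := hw
      rw [hws]; rfl
    obtain ⟨t, hteq, hlb⟩ := claimB m
    have htm2 : m2 ≤ t := by
      rcases Nat.eq_zero_or_pos m2 with h0 | h0
      · omega
      · have := hlb (m2 - 1) (by omega) (fun i hi => hsome i (by omega))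
        omega
    have hmem2 : some (F (G x) n) ∈ (List.range ((τ (initSeg x m)).length + 1)).map
        (fun i => φ2 (pfx (τ (initSeg x m)) i) n) := by
      rw [List.mem_map]
      refine ⟨m2, ?_, ?_⟩
      · rw [List.mem_range, hteq, initSeg_length]; omega
      · rw [hteq, pfx_initSeg, min_eq_left htm2]
        exact hm2
    obtain ⟨w, hw⟩ := fstSome_isSome hmem2
    have hwval : w = F (G x) n := by
      have hmemw := fstSome_eq_some_mem hw
      rw [List.mem_map] at hmemw
      obtain ⟨i, _, hi⟩ := hmemw
      rw [hteq, pfx_initSeg] at hi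
      exact (hc2 (G x) hGA n).2 _ w hi
    have hws : ψ (initSeg x m) n = some w := hw
    rw [hws, hwval]
  · -- consistency
    intro m v hv
    obtain ⟨t, hteq, _⟩ := claimB m
    rw [hψ] at hv
    have hmem := fstSome_eq_some_mem hv
    rw [List.mem_map] at hmem
    obtain ⟨i, _, hi⟩ := hmem
    rw [hteq, pfx_initSeg] at hi
    exact (hc2 (G x) hGA n).2 _ v hi

end Comp
section WRedBasic

lemma WRed.refl (f : Problem) : WRed f f := by
  refine ⟨proj2, fun x => x, computableOn_id _, computableOn_proj2 _, fun x hx => ⟨hx, ?_⟩⟩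
  intro y hy
  rw [proj2_pair]
  exact hy

lemma WRed.trans {f g e : Problem} (h1 : WRed f g) (h2 : WRed g e) : WRed f e := by
  obtain ⟨H1, K1, hK1, hH1, hr1⟩ := h1
  obtain ⟨H2, K2, hK2, hH2, hr2⟩ := h2
  set P : Set Baire := {p | ∃ x ∈ Dom f, ∃ z ∈ e (K2 (K1 x)), p = pair x z} with hP
  have hPx : ∀ p ∈ P, proj1 p ∈ Dom f ∧ proj2 p ∈ e (K2 (K1 (proj1 p))) := by
    rintro p ⟨x, hx, z, hz, rfl⟩
    rw [proj1_pair, proj2_pair]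
    exact ⟨hx, hz⟩
  have ck : ComputableOn (fun x => K2 (K1 x)) (Dom f) :=
    ComputableOn.compF hK2 hK1 (fun x hx => (hr1 x hx).1)
  have cp1 : ComputableOn proj1 P := computableOn_proj1 P
  have cp2 : ComputableOn proj2 P := computableOn_proj2 P
  have cK1p1 : ComputableOn (fun p => K1 (proj1 p)) P :=
    ComputableOn.compF hK1 cp1 (fun p hp => (hPx p hp).1)
  have cq1 : ComputableOn (fun p => pair (K1 (proj1 p)) (proj2 p)) P :=
    ComputableOn.pairF cK1p1 cp2
  have cq2 : ComputableOn (fun p => H2 (pair (K1 (proj1 p)) (proj2 p))) P := by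
    refine ComputableOn.compF hH2 cq1 ?_
    intro p hp
    exact ⟨K1 (proj1 p), (hr1 _ (hPx p hp).1).1, proj2 p, (hPx p hp).2, rfl⟩
  have cq3 : ComputableOn (fun p => pair (proj1 p) (H2 (pair (K1 (proj1 p)) (proj2 p)))) P :=
    ComputableOn.pairF cp1 cq2
  have ch : ComputableOn (fun p => H1 (pair (proj1 p) (H2 (pair (K1 (proj1 p)) (proj2 p))))) P := by
    refine ComputableOn.compF hH1 cq3 ?_
    intro p hp
    refine ⟨proj1 p, (hPx p hp).1, H2 (pair (K1 (proj1 p)) (proj2 p)), ?_, rfl⟩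
    exact (hr2 (K1 (proj1 p)) (hr1 _ (hPx p hp).1).1).2 (proj2 p) (hPx p hp).2
  refine ⟨_, _, ck, ch, fun x hx => ⟨(hr2 (K1 x) (hr1 x hx).1).1, ?_⟩⟩
  intro z hz
  have h2' : H2 (pair (K1 x) z) ∈ g (K1 x) := (hr2 (K1 x) (hr1 x hx).1).2 z hz
  have h1' : H1 (pair x (H2 (pair (K1 x) z))) ∈ f x := (hr1 x hx).2 _ h2'
  simpa [proj1_pair, proj2_pair] using h1'

lemma WRed.contWRed {f g : Problem} (h : WRed f g) : ContWRed f g := by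
  obtain ⟨H, K, hK, hH, hr⟩ := h
  exact ⟨H, K, hK.continuousOn, hH.continuousOn, hr⟩

lemma Dom_idp : Dom idp = Set.univ := by
  ext x; simp [Dom, idp]

lemma Dom_LPO : Dom LPO = Set.univ := by
  ext x
  simp only [Set.mem_univ, iff_true]
  by_cases h : ∃ n, x n = 0
  · exact ⟨cseq 0, Or.inl ⟨h, rfl⟩⟩
  · push_neg at h
    exact ⟨cseq 1, Or.inr ⟨h, rfl⟩⟩

lemma pcomp_idp (q : Problem) : pcomp idp q = q := by
  funext x
  ext z
  simp only [pcomp, Set.mem_setOf_eq, idp]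
  constructor
  · rintro ⟨_, y, hy, hz⟩
    rw [Set.mem_singleton_iff] at hz
    rwa [hz]
  · intro hz
    refine ⟨?_, z, hz, rfl⟩
    intro y _
    rw [Dom_idp]
    trivial

lemma WRed_idp_LPO : WRed idp LPO := by
  refine ⟨proj1, fun x => x, computableOn_id _, computableOn_proj1 _, fun x hx => ⟨?_, ?_⟩⟩
  · rw [Dom_LPO]; trivial
  · intro y _
    rw [proj1_pair]
    rfl

lemma iterEquiv : ∀ {n : ℕ} {p q : Problem}, IsIter LPO n p → IsIter LPO n q → WRed p q := by
  intro n
  induction n with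
  | zero =>
    intro p q hp hq
    rw [show p = idp from hp, show q = idp from hq]
    exact WRed.refl idp
  | succ n ih =>
    rintro p q ⟨p', hp', ⟨⟨f1, g1, hf1, hg1, hpe⟩, _⟩⟩ ⟨q', hq', hcpq⟩
    exact hpe.1.trans (hcpq.2 f1 g1 hf1 (hg1.trans (ih hp' hq')))

lemma iter_le {n : ℕ} {p q : Problem} (hp : IsIter LPO n p) (hq : IsIter LPO (n + 1) q) :
    WRed p q := by
  obtain ⟨q', hq', hcp⟩ := hq
  have hq'q : WRed q' q := by
    have := hcp.2 idp q' WRed_idp_LPO (WRed.refl q')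
    rwa [pcomp_idp] at this
  exact (iterEquiv hp hq').trans hq'q

end WRedBasic
section Counting

def cntL (l : List ℕ) : ℕ := l.foldr (fun a s => if a = 0 then s + 1 else s) 0

def cnt (x : Baire) (N : ℕ) : ℕ := cntL (initSeg x N)

lemma cntL_append_singleton (l : List ℕ) (a : ℕ) :
    cntL (l ++ [a]) = cntL l + (if a = 0 then 1 else 0) := by
  induction l with
  | nil => simp [cntL]
  | cons b l ih =>
    simp only [List.cons_append, cntL, List.foldr_cons] at *
    by_cases h : b = 0 <;> simp [h, ih] <;> omega

lemma cnt_zero (x : Baire) : cnt x 0 = 0 := rfl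

lemma cnt_succ (x : Baire) (N : ℕ) :
    cnt x (N + 1) = cnt x N + (if x N = 0 then 1 else 0) := by
  unfold cnt
  rw [initSeg_succ_right, cntL_append_singleton]

lemma cnt_mono (x : Baire) {N M : ℕ} (h : N ≤ M) : cnt x N ≤ cnt x M := by
  induction M with
  | zero =>
    have : N = 0 := by omega
    rw [this]
  | succ M ih =>
    rcases Nat.lt_or_ge N (M + 1) with h' | h'
    · have := ih (by omega)
      rw [cnt_succ]
      split <;> omega
    · have : N = M + 1 := by omega
      rw [this]

lemma cnt_congr {x y : Baire} {N : ℕ} (h : ∀ i < N, y i = x i) : cnt y N = cnt x N := by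
  unfold cnt
  rw [initSeg_congr h]

def zle (x : Baire) (j : ℕ) : Prop := ∃ N, j ≤ cnt x N

lemma zle_zero (x : Baire) : zle x 0 := ⟨0, Nat.zero_le _⟩

lemma zle_anti {x : Baire} {j j' : ℕ} (h : j' ≤ j) (hj : zle x j) : zle x j' := by
  obtain ⟨N, hN⟩ := hj
  exact ⟨N, by omega⟩

open Classical in
noncomputable def val (m : ℕ) (x : Baire) : ℕ := Nat.findGreatest (fun j => zle x j) m

lemma zle_val (m : ℕ) (x : Baire) : zle x (val m x) := by
  classical
  rcases Nat.eq_zero_or_pos (val m x) with h | h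
  · rw [h]; exact zle_zero x
  · exact Nat.findGreatest_of_ne_zero (rfl : val m x = val m x) (by omega)

lemma val_le (m : ℕ) (x : Baire) : val m x ≤ m := by
  classical
  exact Nat.findGreatest_le m

lemma le_val {m j : ℕ} {x : Baire} (hj : j ≤ m) (h : zle x j) : j ≤ val m x := by
  classical
  exact Nat.le_findGreatest hj h

lemma not_zle_of_val_lt {m j : ℕ} {x : Baire} (h : val m x < j) (hj : j ≤ m) : ¬ zle x j := by
  classical
  exact Nat.findGreatest_is_greatest h hj

end Counting
section Witness

def Dmap (x : Baire) : Baire := fun n => if x n = 0 ∧ cnt x (n + 1) % 2 = 0 then 0 else 1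

lemma cnt_Dmap (x : Baire) (N : ℕ) : cnt (Dmap x) N = cnt x N / 2 := by
  induction N with
  | zero => simp [cnt_zero]
  | succ N ih =>
    rw [cnt_succ, cnt_succ, ih]
    by_cases h : x N = 0
    · have hc : cnt x (N + 1) = cnt x N + 1 := by rw [cnt_succ, if_pos h]
      by_cases hp : (cnt x N + 1) % 2 = 0
      · have : Dmap x N = 0 := by simp [Dmap, h, hc, hp]
        rw [this, if_pos rfl, if_pos h]
        omega
      · have : Dmap x N = 1 := by simp [Dmap, h, hc, hp]
        rw [this, if_neg (by norm_num), if_pos h]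
        omega
    · have : Dmap x N = 1 := by simp [Dmap, h]
      rw [this, if_neg (by norm_num), if_neg h]
      omega

lemma zle_Dmap (x : Baire) (j : ℕ) : zle (Dmap x) j ↔ zle x (2 * j) := by
  unfold zle
  constructor
  · rintro ⟨N, hN⟩
    rw [cnt_Dmap] at hN
    exact ⟨N, by omega⟩
  · rintro ⟨N, hN⟩
    refine ⟨N, ?_⟩
    rw [cnt_Dmap]
    omega

open Classical in
lemma val_split (m : ℕ) (x : Baire) :
    val (2 * m + 1) x = 2 * val m (Dmap x) + (if zle x (2 * val m (Dmap x) + 1) then 1 else 0) := by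
  classical
  set K := val m (Dmap x) with hK
  have hK2 : zle x (2 * K) := (zle_Dmap x K).mp (zle_val m (Dmap x))
  have hKm : K ≤ m := val_le m (Dmap x)
  have hvle : val (2 * m + 1) x ≤ 2 * m + 1 := val_le _ _
  by_cases hb : zle x (2 * K + 1)
  · rw [if_pos hb]
    apply le_antisymm
    · by_contra hlt
      push_neg at hlt
      have h1 : zle x (val (2 * m + 1) x) := zle_val _ _
      have h2 : zle x (2 * K + 2) := zle_anti (by omega) h1
      have hz' : zle (Dmap x) (K + 1) := (zle_Dmap x (K + 1)).mpr
        (by rw [show 2 * (K + 1) = 2 * K + 2 by omega]; exact h2)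
      rcases Nat.lt_or_ge K m with h' | h'
      · have := le_val (by omega : K + 1 ≤ m) hz'
        omega
      · omega
    · exact le_val (by omega) hb
  · rw [if_neg hb]
    apply le_antisymm
    · by_contra hlt
      push_neg at hlt
      have h1 : zle x (val (2 * m + 1) x) := zle_val _ _
      exact hb (zle_anti (by omega) h1)
    · exact le_val (by omega) hK2

lemma cnt_cseq_one (N : ℕ) : cnt (cseq 1) N = 0 := by
  induction N with
  | zero => exact cnt_zero _
  | succ N ih => rw [cnt_succ, ih]; simp [cseq]

lemma val_cseq_one (m : ℕ) : val m (cseq 1) = 0 := by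
  by_contra h
  have h1 : zle (cseq 1) (val m (cseq 1)) := zle_val _ _
  obtain ⟨N, hN⟩ := h1
  rw [cnt_cseq_one] at hN
  omega

lemma val_approx {m : ℕ} {x : Baire} (h : val m x < m) :
    ∀ N, ∃ y : Baire, (∀ i < N, y i = x i) ∧ val m y = val m x + 1 := by
  intro N
  set t := val m x with ht
  have hnot : ¬ zle x (t + 1) := not_zle_of_val_lt (m := m) (x := x) (by omega) (by omega)
  have hbd : ∀ N', cnt x N' ≤ t := by
    intro N'
    by_contra hc
    exact hnot ⟨N', by omega⟩
  obtain ⟨N0, hN0⟩ := zle_val m x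
  set M := max N N0 with hM
  have hcM : cnt x M = t := by
    have h1 : cnt x N0 ≤ cnt x M := cnt_mono x (le_max_right _ _)
    have h2 := hbd M
    omega
  set y : Baire := fun i => if i < M then x i else if i = M then 0 else 1 with hy
  have hagree : ∀ i < M, y i = x i := fun i hi => by simp [hy, hi]
  have hyM : y M = 0 := by simp [hy]
  have hcyM : cnt y M = t := by rw [cnt_congr hagree]; exact hcM
  have hcy1 : cnt y (M + 1) = t + 1 := by rw [cnt_succ, hcyM, if_pos hyM]
  have hcybd : ∀ N', cnt y N' ≤ t + 1 := by
    intro N'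
    rcases le_or_gt N' (M + 1) with h' | h'
    · calc cnt y N' ≤ cnt y (M + 1) := cnt_mono y h'
        _ = t + 1 := hcy1
    · -- induction above M+1
      have : ∀ k, cnt y (M + 1 + k) = t + 1 := by
        intro k
        induction k with
        | zero => exact hcy1
        | succ k ih =>
          rw [show M + 1 + (k+1) = (M + 1 + k) + 1 by omega, cnt_succ, ih]
          have h1 : ¬ (M + 1 + k < M) := by omega
          have h2 : ¬ (M + 1 + k = M) := by omega
          have hy1 : y (M + 1 + k) = 1 := by simp [hy, h1, h2]
          rw [hy1]
          norm_num
      have := this (N' - (M + 1))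
      rw [show M + 1 + (N' - (M+1)) = N' by omega] at this
      omega
  refine ⟨y, fun i hi => hagree i (by omega), ?_⟩
  apply le_antisymm
  · by_contra hc
    push_neg at hc
    have h1 : zle y (val m y) := zle_val _ _
    have h2 : zle y (t + 2) := zle_anti (by omega) h1
    obtain ⟨N', hN'⟩ := h2
    have := hcybd N'
    omega
  · exact le_val (by omega) ⟨M + 1, by omega⟩

/-- the witness problem: compute `min(#zeros, m)` -/
def Gm (m : ℕ) : Problem := fun x => {y | y = cseq (val m x)}

def evens (z : Baire) : Baire := fun n => z (2 * n)

@[simp] lemma cseq_apply (k n : ℕ) : cseq k n = k := rfl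

open Classical in
/-- last-query problem, reducible to LPO -/
def fP : Problem := fun z =>
  {y | y = cseq (2 * z 1 + (if zle (evens z) (2 * z 1 + 1) then 1 else 0))}

/-- pre-processing problem, reducible to `Gm m` -/
def gP (m : ℕ) : Problem := fun x => {y | y = pair x (cseq (val m (Dmap x)))}

lemma Dom_Gm (m : ℕ) : Dom (Gm m) = Set.univ := by
  ext x; simp only [Dom, Gm, Set.mem_univ, iff_true, Set.mem_setOf_eq]
  exact ⟨_, rfl⟩

lemma Dom_fP : Dom fP = Set.univ := by
  ext x; simp only [Dom, fP, Set.mem_univ, iff_true, Set.mem_setOf_eq]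
  exact ⟨_, rfl⟩

lemma Dom_gP (m : ℕ) : Dom (gP m) = Set.univ := by
  ext x; simp only [Dom, gP, Set.mem_univ, iff_true, Set.mem_setOf_eq]
  exact ⟨_, rfl⟩

lemma evens_pair (x w : Baire) : evens (pair x w) = x := by
  funext n
  simp [evens, pair_even]

lemma pair_one (x w : Baire) : pair x w 1 = w 0 := by
  have : (1 : ℕ) = 2 * 0 + 1 := by norm_num
  rw [this, pair_odd]

lemma pcomp_fP_gP (m : ℕ) : pcomp fP (gP m) = Gm (2 * m + 1) := by
  classical
  funext x
  ext z
  simp only [pcomp, Gm, fP, gP, Set.mem_setOf_eq]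
  constructor
  · rintro ⟨_, y, hy, hz⟩
    subst hy
    rw [evens_pair, pair_one, cseq_apply, ← val_split m x] at hz
    exact hz
  · intro hz
    refine ⟨?_, pair x (cseq (val m (Dmap x))), rfl, ?_⟩
    · intro y _
      rw [Dom_fP]
      trivial
    · rw [evens_pair, pair_one, cseq_apply, ← val_split m x]
      exact hz

end Witness
section Reductions

lemma primrec_cntL : Primrec cntL := by
  have h : Primrec₂ fun (_ : List ℕ) (p : ℕ × ℕ) => if p.1 = 0 then p.2 + 1 else p.2 := by
    apply Primrec.ite
    · exact Primrec.eq.comp (Primrec.fst.comp Primrec.snd) (Primrec.const 0)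
    · exact Primrec.succ.comp (Primrec.snd.comp Primrec.snd)
    · exact Primrec.snd.comp Primrec.snd
  exact (Primrec.list_foldr Primrec.id (Primrec.const 0) h).of_eq fun l => rfl

/-- the LPO-query sequence for `fP` -/
def theta (z : Baire) : Baire := fun j => if 2 * z 1 + 1 ≤ cnt (evens z) j then 0 else 1

lemma cnt_evens_eq (z : Baire) (j : ℕ) :
    cnt (evens z) j = cntL ((List.range j).map (fun i => z (2 * i))) := rfl

lemma computableOn_theta (D : Set Baire) : ComputableOn theta D := by
  set φ : List ℕ → ℕ → Option ℕ := fun σ j =>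
    if 2 * j + 2 ≤ σ.length then
      some (if 2 * σ.getD 1 0 + 1 ≤ cntL ((List.range j).map (fun i => σ.getD (2 * i) 0))
        then 0 else 1)
    else none with hφ
  have hcomp : Computable₂ φ := by
    have hlenc : PrimrecPred fun p : List ℕ × ℕ => 2 * p.2 + 2 ≤ p.1.length :=
      Primrec.nat_le.comp
        (Primrec.succ.comp (Primrec.succ.comp
          (Primrec.nat_mul.comp (Primrec.const 2) Primrec.snd)))
        (Primrec.list_length.comp Primrec.fst)
    have hmap : Primrec fun p : List ℕ × ℕ =>
        (List.range p.2).map (fun i => p.1.getD (2 * i) 0) := by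
      apply Primrec.list_map (Primrec.list_range.comp Primrec.snd)
      exact ((Primrec.list_getD 0).comp (Primrec.fst.comp Primrec.fst)
        (Primrec.nat_mul.comp (Primrec.const 2) Primrec.snd)).to₂
    have hinner : PrimrecPred fun p : List ℕ × ℕ =>
        2 * p.1.getD 1 0 + 1 ≤ cntL ((List.range p.2).map (fun i => p.1.getD (2 * i) 0)) :=
      Primrec.nat_le.comp
        (Primrec.succ.comp (Primrec.nat_mul.comp (Primrec.const 2)
          ((Primrec.list_getD 0).comp Primrec.fst (Primrec.const 1))))
        (primrec_cntL.comp hmap)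
    have : Primrec₂ φ := by
      apply Primrec.ite hlenc _ (Primrec.const none)
      exact Primrec.option_some.comp (Primrec.ite hinner (Primrec.const 0) (Primrec.const 1))
    exact this.to_comp
  refine ⟨φ, hcomp, fun z _ j => ?_⟩
  have key : ∀ M, 2 * j + 2 ≤ M → φ (initSeg z M) j = some (theta z j) := by
    intro M hM
    rw [hφ]
    simp only [initSeg_length]
    rw [if_pos hM]
    congr 1
    have e1 : (initSeg z M).getD 1 0 = z 1 := initSeg_getD z (by omega) 0
    have e2 : (List.range j).map (fun i => (initSeg z M).getD (2 * i) 0)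
        = (List.range j).map (fun i => z (2 * i)) := by
      apply List.map_congr_left
      intro i hi
      rw [List.mem_range] at hi
      exact initSeg_getD z (by omega) 0
    rw [e1, e2, ← cnt_evens_eq]
    rfl
  constructor
  · exact ⟨2 * j + 2, key _ (le_refl _)⟩
  · intro M v hv
    rw [hφ] at hv
    simp only [initSeg_length] at hv
    by_cases hM : 2 * j + 2 ≤ M
    · have := key M hM
      rw [hφ] at this
      simp only [initSeg_length] at this
      rw [this] at hv
      exact (Option.some_inj.mp hv).symm
    · rw [if_neg hM] at hv
      exact absurd hv (by simp)

/-- backward functional for `fP ≤ LPO` -/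
def hfP : Baire → Baire := fun p => fun _ => 2 * p 2 + 1 - p 1

lemma computableOn_hfP (D : Set Baire) : ComputableOn hfP D := by
  refine ⟨fun σ _ => if 3 ≤ σ.length then some (2 * σ.getD 2 0 + 1 - σ.getD 1 0) else none,
    ?_, fun p _ n => ?_⟩
  · have hc : PrimrecPred fun q : List ℕ × ℕ => 3 ≤ q.1.length :=
      Primrec.nat_le.comp (Primrec.const 3) (Primrec.list_length.comp Primrec.fst)
    have : Primrec₂ fun (σ : List ℕ) (_ : ℕ) =>
        if 3 ≤ σ.length then some (2 * σ.getD 2 0 + 1 - σ.getD 1 0) else none := by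
      apply Primrec.ite hc _ (Primrec.const none)
      apply Primrec.option_some.comp
      apply Primrec.nat_sub.comp
      · exact Primrec.succ.comp (Primrec.nat_mul.comp (Primrec.const 2)
          ((Primrec.list_getD 0).comp Primrec.fst (Primrec.const 2)))
      · exact (Primrec.list_getD 0).comp Primrec.fst (Primrec.const 1)
    exact this.to_comp
  · have key : ∀ M, 3 ≤ M → (if 3 ≤ (initSeg p M).length
        then some (2 * (initSeg p M).getD 2 0 + 1 - (initSeg p M).getD 1 0) else none)
        = some (hfP p n) := by
      intro M hM
      rw [initSeg_length, if_pos hM, initSeg_getD p (by omega) 0, initSeg_getD p (by omega) 0]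
      rfl
    constructor
    · exact ⟨3, key 3 (le_refl _)⟩
    · intro M v hv
      dsimp only at hv
      by_cases hM : 3 ≤ M
      · rw [key M hM] at hv
        exact (Option.some_inj.mp hv).symm
      · rw [initSeg_length, if_neg hM] at hv
        exact absurd hv (by simp)

open Classical in
lemma WRed_fP_LPO : WRed fP LPO := by
  refine ⟨hfP, theta, computableOn_theta _, computableOn_hfP _, fun z _ => ⟨?_, ?_⟩⟩
  · rw [Dom_LPO]; trivial
  · intro y hy
    have hp2 : pair z y 2 = z 1 := by
      have : (2 : ℕ) = 2 * 1 := by norm_num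
      rw [this, pair_even]
    have hp1 : pair z y 1 = y 0 := pair_one z y
    rcases hy with ⟨⟨N, hN⟩, hy0⟩ | ⟨hall, hy1⟩
    · -- a zero exists: zle holds
      have hzle : zle (evens z) (2 * z 1 + 1) := by
        by_contra hc
        have : theta z N = 1 := by
          unfold theta
          rw [if_neg]
          intro hle
          exact hc ⟨N, hle⟩
        omega
      show hfP (pair z y) ∈ fP z
      unfold fP
      rw [Set.mem_setOf_eq, if_pos hzle]
      funext k
      unfold hfP
      rw [hp2, hp1, hy0, cseq_apply, cseq_apply]
      omega
    · -- no zero: zle fails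
      have hzle : ¬ zle (evens z) (2 * z 1 + 1) := by
        rintro ⟨N, hN⟩
        apply hall N
        unfold theta
        rw [if_pos hN]
      show hfP (pair z y) ∈ fP z
      unfold fP
      rw [Set.mem_setOf_eq, if_neg hzle]
      funext k
      unfold hfP
      rw [hp2, hp1, hy1, cseq_apply, cseq_apply]
      omega

lemma computableOn_Dmap (D : Set Baire) : ComputableOn Dmap D := by
  set φ : List ℕ → ℕ → Option ℕ := fun σ n =>
    if n + 1 ≤ σ.length then
      some (if σ.getD n 0 = 0 then (if cntL (pfx σ (n + 1)) % 2 = 0 then 0 else 1) else 1)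
    else none with hφ
  have hcomp : Computable₂ φ := by
    have hlenc : PrimrecPred fun p : List ℕ × ℕ => p.2 + 1 ≤ p.1.length :=
      Primrec.nat_le.comp (Primrec.succ.comp Primrec.snd) (Primrec.list_length.comp Primrec.fst)
    have hc1 : PrimrecPred fun p : List ℕ × ℕ => p.1.getD p.2 0 = 0 :=
      Primrec.eq.comp ((Primrec.list_getD 0).comp Primrec.fst Primrec.snd) (Primrec.const 0)
    have hc2 : PrimrecPred fun p : List ℕ × ℕ => cntL (pfx p.1 (p.2 + 1)) % 2 = 0 :=
      Primrec.eq.comp (Primrec.nat_mod.comp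
        (primrec_cntL.comp (primrec_pfx.comp Primrec.fst (Primrec.succ.comp Primrec.snd)))
        (Primrec.const 2)) (Primrec.const 0)
    have : Primrec₂ φ := by
      apply Primrec.ite hlenc _ (Primrec.const none)
      apply Primrec.option_some.comp
      exact Primrec.ite hc1 (Primrec.ite hc2 (Primrec.const 0) (Primrec.const 1)) (Primrec.const 1)
    exact this.to_comp
  refine ⟨φ, hcomp, fun x _ n => ?_⟩
  have key : ∀ M, n + 1 ≤ M → φ (initSeg x M) n = some (Dmap x n) := by
    intro M hM
    rw [hφ]
    simp only [initSeg_length]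
    rw [if_pos hM]
    congr 1
    rw [initSeg_getD x (by omega) 0, pfx_initSeg, min_eq_left hM]
    show _ = Dmap x n
    unfold Dmap cnt
    by_cases h1 : x n = 0
    · by_cases h2 : cntL (initSeg x (n + 1)) % 2 = 0
      · simp [h1, h2]
      · simp [h1, h2]
    · simp [h1]
  constructor
  · exact ⟨n + 1, key _ (le_refl _)⟩
  · intro M v hv
    rw [hφ] at hv
    simp only [initSeg_length] at hv
    by_cases hM : n + 1 ≤ M
    · have := key M hM
      rw [hφ] at this
      simp only [initSeg_length] at this
      rw [this] at hv
      exact (Option.some_inj.mp hv).symm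
    · rw [if_neg hM] at hv
      exact absurd hv (by simp)

lemma WRed_gP_Gm (m : ℕ) : WRed (gP m) (Gm m) := by
  refine ⟨fun p => p, Dmap, computableOn_Dmap _, computableOn_id _, fun x _ => ⟨?_, ?_⟩⟩
  · rw [Dom_Gm]; trivial
  · intro y hy
    show pair x y ∈ gP m x
    unfold Gm at hy
    rw [Set.mem_setOf_eq] at hy
    unfold gP
    rw [Set.mem_setOf_eq, hy]

lemma WRed_G0_idp : WRed (Gm 0) idp := by
  refine ⟨fun _ => cseq 0, fun x => x, computableOn_id _, computableOn_const 0 _,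
    fun x _ => ⟨?_, ?_⟩⟩
  · rw [Dom_idp]; trivial
  · intro y _
    show cseq 0 ∈ Gm 0 x
    unfold Gm
    rw [Set.mem_setOf_eq]
    have : val 0 x = 0 := by
      have := val_le 0 x
      omega
    rw [this]

lemma U_lemma : ∀ {n : ℕ} {q : Problem}, IsIter LPO n q → WRed (Gm (2 ^ n - 1)) q := by
  intro n
  induction n with
  | zero =>
    intro q hq
    rw [show q = idp from hq]
    exact WRed_G0_idp
  | succ n ih =>
    rintro q ⟨q', hq', hcp⟩
    have h1 : WRed (gP (2 ^ n - 1)) q' := (WRed_gP_Gm _).trans (ih hq')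
    have h2 := hcp.2 fP (gP (2 ^ n - 1)) WRed_fP_LPO h1
    rw [pcomp_fP_gP] at h2
    have he : 2 * (2 ^ n - 1) + 1 = 2 ^ (n + 1) - 1 := by
      have := Nat.one_le_two_pow (n := n)
      rw [pow_succ]
      omega
    rwa [he] at h2

end Reductions
section SolvL

def RelClosedIn (A S : Set Baire) : Prop := ∀ x ∈ A, x ∈ closure S → x ∈ S

def SolvL (m : ℕ) (f : Problem) : Prop :=
  ∃ (F : Baire → Baire) (C : ℕ → Set Baire),
    (∀ x ∈ Dom f, F x ∈ f x) ∧ C 0 = Dom f ∧ (∀ i, C (i + 1) ⊆ C i) ∧ C m = ∅ ∧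
    (∀ i, RelClosedIn (Dom f) (C i)) ∧ (∀ i, ContinuousOn F (C i \ C (i + 1)))

lemma continuousOn_pairF {u v : Baire → Baire} {s : Set Baire}
    (hu : ContinuousOn u s) (hv : ContinuousOn v s) :
    ContinuousOn (fun x => pair (u x) (v x)) s := by
  intro x hx
  rw [continuousWithinAt_pi]
  intro n
  by_cases h : n % 2 = 0
  · have e : (fun y => pair (u y) (v y) n) = fun y => u y (n / 2) := by
      funext y; simp [pair, h]
    rw [e]
    exact ((continuous_apply (n / 2)).continuousAt).comp_continuousWithinAt (hu x hx)
  · have e : (fun y => pair (u y) (v y) n) = fun y => v y (n / 2) := by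
      funext y; simp [pair, h]
    rw [e]
    exact ((continuous_apply (n / 2)).continuousAt).comp_continuousWithinAt (hv x hx)

lemma SolvL.of_contWRed {f g : Problem} {m : ℕ} (hred : ContWRed f g) (hs : SolvL m g) :
    SolvL m f := by
  obtain ⟨H, K, hK, hH, hr⟩ := hred
  obtain ⟨F, C, hF, hC0, hCa, hCm, hCrc, hFc⟩ := hs
  have hKin : ∀ x ∈ Dom f, K x ∈ Dom g := fun x hx => (hr x hx).1
  refine ⟨fun x => H (pair x (F (K x))),
    fun i => Nat.casesOn i (Dom f) (fun i' => {x ∈ Dom f | K x ∈ C (i' + 1)}),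
    ?_, rfl, ?_, ?_, ?_, ?_⟩
  · -- realizer
    intro x hx
    exact (hr x hx).2 (F (K x)) (hF (K x) (hKin x hx))
  · -- antitone
    intro i
    cases i with
    | zero => exact Set.sep_subset _ _
    | succ i => exact fun x hx => ⟨hx.1, hCa (i + 1) hx.2⟩
  · -- m-th empty
    cases m with
    | zero =>
      show Dom f = ∅
      ext x
      simp only [Set.mem_empty_iff_false, iff_false]
      intro hx
      have h1 := hKin x hx
      rw [← hC0, hCm] at h1
      exact h1
    | succ m =>
      show {x ∈ Dom f | K x ∈ C (m + 1)} = ∅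
      rw [hCm]
      ext x
      simp
  · -- rel closed
    intro i x hx hcl
    cases i with
    | zero => exact hx
    | succ i =>
      set S := {x ∈ Dom f | K x ∈ C (i + 1)} with hS
      have hSsub : S ⊆ Dom f := Set.sep_subset _ _
      have hcwa : ContinuousWithinAt K S x := (hK x hx).mono hSsub
      have h1 : K x ∈ closure (K '' S) := hcwa.mem_closure_image hcl
      have h2 : K '' S ⊆ C (i + 1) := by
        rintro _ ⟨y, hy, rfl⟩
        exact hy.2
      exact ⟨hx, hCrc (i + 1) (K x) (hKin x hx) (closure_mono h2 h1)⟩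
  · -- continuity
    have hT : ∀ i, ContinuousOn (fun x => H (pair x (F (K x))))
        {x ∈ Dom f | K x ∈ C i \ C (i + 1)} := by
      intro i
      have hKT : ContinuousOn K {x ∈ Dom f | K x ∈ C i \ C (i + 1)} :=
        hK.mono (Set.sep_subset _ _)
      have hinner : ContinuousOn (fun x => F (K x)) {x ∈ Dom f | K x ∈ C i \ C (i + 1)} :=
        ContinuousOn.comp (hFc i) hKT (fun x hx => hx.2)
      have hpair := continuousOn_pairF continuousOn_id hinner
      refine ContinuousOn.comp hH hpair ?_
      intro x hx
      exact ⟨x, hx.1, F (K x), hF (K x) (hKin x hx.1), rfl⟩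
    intro i
    cases i with
    | zero =>
      refine (hT 0).mono ?_
      rintro x ⟨hx, hnot⟩
      refine ⟨hx, ?_, fun hmem => hnot ⟨hx, hmem⟩⟩
      rw [hC0]
      exact hKin x hx
    | succ i =>
      refine (hT (i + 1)).mono ?_
      rintro x ⟨⟨hx, hKx⟩, hnot⟩
      exact ⟨hx, hKx, fun hmem => hnot ⟨hx, hmem⟩⟩

lemma isClosed_noZero : IsClosed {x : Baire | ∀ n, x n ≠ 0} := by
  have : {x : Baire | ∀ n, x n ≠ 0} = ⋂ n, (fun x : Baire => x n) ⁻¹' ({0}ᶜ) := by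
    ext x; simp
  rw [this]
  exact isClosed_iInter fun n => (isClosed_discrete _).preimage (continuous_apply n)

open Classical in
lemma SolvL_LPO : SolvL 2 LPO := by
  classical
  refine ⟨fun x => if ∃ n, x n = 0 then cseq 0 else cseq 1,
    fun i => match i with
      | 0 => Set.univ
      | 1 => {x | ∀ n, x n ≠ 0}
      | _ + 2 => ∅,
    ?_, by rw [Dom_LPO], ?_, rfl, ?_, ?_⟩
  · intro x _
    by_cases h : ∃ n, x n = 0
    · show (if ∃ n, x n = 0 then cseq 0 else cseq 1) ∈ LPO x
      rw [if_pos h]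
      exact Or.inl ⟨h, rfl⟩
    · show (if ∃ n, x n = 0 then cseq 0 else cseq 1) ∈ LPO x
      rw [if_neg h]
      push_neg at h
      exact Or.inr ⟨h, rfl⟩
  · intro i
    rcases i with _ | _ | i
    · exact fun x _ => trivial
    · exact fun x hx => absurd hx (Set.notMem_empty x)
    · exact fun x hx => absurd hx (Set.notMem_empty x)
  · intro i x _ hcl
    rcases i with _ | _ | i
    · trivial
    · exact isClosed_noZero.closure_subset hcl
    · simp only [closure_empty] at hcl
      exact hcl
  · intro i
    rcases i with _ | _ | i
    · show ContinuousOn _ (Set.univ \ {x : Baire | ∀ n, x n ≠ 0})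
      refine ContinuousOn.congr (continuousOn_const (c := cseq 0)) ?_
      rintro x ⟨_, hx⟩
      simp only [Set.mem_setOf_eq] at hx
      push_neg at hx
      exact if_pos hx
    · show ContinuousOn _ ({x : Baire | ∀ n, x n ≠ 0} \ ∅)
      rw [Set.diff_empty]
      refine ContinuousOn.congr (continuousOn_const (c := cseq 1)) ?_
      intro x hx
      simp only [Set.mem_setOf_eq] at hx
      refine if_neg ?_
      rintro ⟨n, hn⟩
      exact hx n hn
    · show ContinuousOn _ ((∅ : Set Baire) \ ∅)
      rw [Set.empty_diff]
      exact continuousOn_empty _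

lemma mem_Dom_pcomp {f g : Problem} {x : Baire} (hx : x ∈ Dom (pcomp f g)) :
    g x ⊆ Dom f ∧ x ∈ Dom g := by
  obtain ⟨z, hz⟩ := hx
  obtain ⟨h1, y, hy, _⟩ := hz
  exact ⟨h1, y, hy⟩

lemma SolvL.pcompL {f' g' : Problem} {m : ℕ} (hf : SolvL 2 f') (hg : SolvL m g') :
    SolvL (2 * m) (pcomp f' g') := by
  obtain ⟨Ff, Af, hFf, hAf0, hAfa, hAf2, hAfrc, hFfc⟩ := hf
  obtain ⟨Gg, Cg, hGg, hCg0, hCga, hCgm, hCgrc, hGgc⟩ := hg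
  set Dp := Dom (pcomp f' g') with hDp
  have hDpg : ∀ x ∈ Dp, g' x ⊆ Dom f' ∧ x ∈ Dom g' := fun x hx => mem_Dom_pcomp hx
  have hGgDom : ∀ x ∈ Dp, Gg x ∈ g' x := fun x hx => hGg x (hDpg x hx).2
  have hGgf : ∀ x ∈ Dp, Gg x ∈ Dom f' := fun x hx => (hDpg x hx).1 (hGgDom x hx)
  set E : Set Baire := {x ∈ Cg 0 | True} with hEdummy
  clear_value E
  clear hEdummy
  -- the interleaved chain
  set D : ℕ → Set Baire := fun j =>
    if Even j then Cg (j / 2) ∩ Dp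
    else (Cg (j / 2 + 1) ∪ {x ∈ Cg (j / 2) | Gg x ∈ Af 1}) ∩ Dp with hD
  set Fp : Baire → Baire := fun x => Ff (Gg x) with hFp
  have hDeven : ∀ i, D (2 * i) = Cg i ∩ Dp := by
    intro i
    rw [hD]
    simp only [if_pos (even_two_mul i), Nat.mul_div_cancel_left i (by norm_num : 0 < 2)]
  have hDodd : ∀ i, D (2 * i + 1) = (Cg (i + 1) ∪ {x ∈ Cg i | Gg x ∈ Af 1}) ∩ Dp := by
    intro i
    rw [hD]
    have h1 : ¬ Even (2 * i + 1) := by simp [Nat.even_add_one, Nat.even_mul]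
    have h2 : (2 * i + 1) / 2 = i := by omega
    simp only [if_neg h1, h2]
  have hT1 : ∀ i, ContinuousOn Fp {x ∈ (Cg i \ Cg (i + 1)) ∩ Dp | Gg x ∉ Af 1} := by
    intro i
    refine ContinuousOn.comp (hFfc 0) (ContinuousOn.mono (hGgc i) ?_) ?_
    · rintro x ⟨⟨hpiece, _⟩, _⟩
      exact hpiece
    · rintro x ⟨⟨_, hxDp⟩, hnot⟩
      rw [hAf0]
      exact ⟨hGgf x hxDp, hnot⟩
  have hT2 : ∀ i, ContinuousOn Fp {x ∈ (Cg i \ Cg (i + 1)) ∩ Dp | Gg x ∈ Af 1} := by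
    intro i
    refine ContinuousOn.comp (hFfc 1) (ContinuousOn.mono (hGgc i) ?_) ?_
    · rintro x ⟨⟨hpiece, _⟩, _⟩
      exact hpiece
    · rintro x ⟨⟨_, _⟩, hmem⟩
      rw [hAf2]
      exact ⟨hmem, Set.notMem_empty _⟩
  have goal_realizer : ∀ x ∈ Dom (pcomp f' g'), Fp x ∈ pcomp f' g' x := by
    intro x hx
    exact ⟨(hDpg x hx).1, Gg x, hGgDom x hx, hFf (Gg x) (hGgf x hx)⟩
  have goal_zero : D 0 = Dom (pcomp f' g') := by
    have h0 := hDeven 0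
    rw [mul_zero] at h0
    rw [h0, hCg0]
    ext x
    exact ⟨fun hx => hx.2, fun hx => ⟨(hDpg x hx).2, hx⟩⟩
  have goal_anti : ∀ j, D (j + 1) ⊆ D j := by
    intro j
    rcases Nat.even_or_odd j with ⟨i, hi⟩ | ⟨i, hi⟩
    · have e1 : j = 2 * i := by omega
      subst e1
      rw [hDeven i, hDodd i]
      rintro x ⟨hu, hxDp⟩
      refine ⟨?_, hxDp⟩
      rcases hu with h | h
      · exact hCga i h
      · exact h.1
    · have e1 : j = 2 * i + 1 := by omega
      subst e1
      have e2 : 2 * i + 1 + 1 = 2 * (i + 1) := by omega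
      rw [e2, hDodd i, hDeven (i + 1)]
      rintro x ⟨hc, hxDp⟩
      exact ⟨Or.inl hc, hxDp⟩
  have goal_empty : D (2 * m) = ∅ := by
    rw [hDeven m, hCgm]
    simp
  have goal_rc : ∀ j, RelClosedIn (Dom (pcomp f' g')) (D j) := by
    intro j x hx hcl
    rcases Nat.even_or_odd j with ⟨i, hi⟩ | ⟨i, hi⟩
    · have e1 : j = 2 * i := by omega
      subst e1
      rw [hDeven i] at hcl ⊢
      have h1 : closure (Cg i ∩ Dp) ⊆ closure (Cg i) := closure_mono Set.inter_subset_left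
      exact ⟨hCgrc i x (hDpg x hx).2 (h1 hcl), hx⟩
    · have e1 : j = 2 * i + 1 := by omega
      subst e1
      rw [hDodd i] at hcl ⊢
      rw [Set.union_inter_distrib_right, closure_union] at hcl
      rcases hcl with hcl | hcl
      · exact ⟨Or.inl (hCgrc (i + 1) x (hDpg x hx).2
          (closure_mono Set.inter_subset_left hcl)), hx⟩
      · have hxCgi : x ∈ Cg i := by
          have hsub : {x ∈ Cg i | Gg x ∈ Af 1} ∩ Dp ⊆ Cg i := fun y hy => hy.1.1
          exact hCgrc i x (hDpg x hx).2 (closure_mono hsub hcl)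
        by_cases hxC1 : x ∈ Cg (i + 1)
        · exact ⟨Or.inl hxC1, hx⟩
        · have hsub2 : {x ∈ Cg i | Gg x ∈ Af 1} ∩ Dp ⊆
              (({x ∈ Cg i | Gg x ∈ Af 1} ∩ Dp) ∩ Cg (i + 1)) ∪
              (({x ∈ Cg i | Gg x ∈ Af 1} ∩ Dp) \ Cg (i + 1)) := by
            intro y hy
            by_cases h : y ∈ Cg (i + 1)
            · exact Or.inl ⟨hy, h⟩
            · exact Or.inr ⟨hy, h⟩
          have hcl2 := closure_mono hsub2 hcl
          rw [closure_union] at hcl2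
          rcases hcl2 with hcl2 | hcl2
          · exact absurd (hCgrc (i + 1) x (hDpg x hx).2
              (closure_mono Set.inter_subset_right hcl2)) hxC1
          · set T := ({x ∈ Cg i | Gg x ∈ Af 1} ∩ Dp) \ Cg (i + 1) with hTd
            have hTsub : T ⊆ Cg i \ Cg (i + 1) := by
              rintro y ⟨⟨hy1, _⟩, hy2⟩
              exact ⟨hy1.1, hy2⟩
            have hcwa : ContinuousWithinAt Gg T x :=
              ((hGgc i) x ⟨hxCgi, hxC1⟩).mono hTsub
            have h1 : Gg x ∈ closure (Gg '' T) := hcwa.mem_closure_image hcl2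
            have h2 : Gg '' T ⊆ Af 1 := by
              rintro _ ⟨y, hy, rfl⟩
              exact hy.1.1.2
            have h3 : Gg x ∈ Af 1 :=
              hAfrc 1 (Gg x) (hGgf x hx) (closure_mono h2 h1)
            exact ⟨Or.inr ⟨hxCgi, h3⟩, hx⟩
  have goal_cont : ∀ j, ContinuousOn Fp (D j \ D (j + 1)) := by
    intro j
    rcases Nat.even_or_odd j with ⟨i, hi⟩ | ⟨i, hi⟩
    · have e1 : j = 2 * i := by omega
      subst e1
      rw [hDeven i, hDodd i]
      refine (hT1 i).mono ?_
      rintro x ⟨⟨hxCgi, hxDp⟩, hnot⟩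
      have hnc1 : x ∉ Cg (i + 1) := fun hc => hnot ⟨Or.inl hc, hxDp⟩
      have hnE : Gg x ∉ Af 1 := fun hc => hnot ⟨Or.inr ⟨hxCgi, hc⟩, hxDp⟩
      exact ⟨⟨⟨hxCgi, hnc1⟩, hxDp⟩, hnE⟩
    · have e1 : j = 2 * i + 1 := by omega
      subst e1
      have e2 : 2 * i + 1 + 1 = 2 * (i + 1) := by omega
      rw [e2, hDodd i, hDeven (i + 1)]
      refine (hT2 i).mono ?_
      rintro x ⟨⟨hu, hxDp⟩, hnot⟩
      have hnc1 : x ∉ Cg (i + 1) := fun hc => hnot ⟨hc, hxDp⟩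
      rcases hu with h | h
      · exact absurd h hnc1
      · exact ⟨⟨⟨h.1, hnc1⟩, hxDp⟩, h.2⟩
  exact ⟨Fp, D, goal_realizer, goal_zero, goal_anti, goal_empty, goal_rc, goal_cont⟩

lemma iter_solv : ∀ {n : ℕ} {p : Problem}, IsIter LPO n p → SolvL (2 ^ n) p := by
  intro n
  induction n with
  | zero =>
    intro p hp
    rw [show p = idp from hp]
    refine ⟨fun x => x,
      fun i => match i with
        | 0 => Set.univ
        | _ + 1 => ∅,
      ?_, by rw [Dom_idp], ?_, rfl, ?_, ?_⟩
    · intro x _; rfl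
    · intro i
      cases i with
      | zero => exact fun x hx => trivial
      | succ i => exact fun x hx => absurd hx (Set.notMem_empty x)
    · intro i x _ hcl
      cases i with
      | zero => trivial
      | succ i =>
        simp only [closure_empty] at hcl
        exact hcl
    · intro i
      cases i with
      | zero =>
        show ContinuousOn _ (Set.univ \ ∅)
        rw [Set.diff_empty]
        exact continuousOn_id
      | succ i =>
        show ContinuousOn _ ((∅ : Set Baire) \ ∅)
        rw [Set.empty_diff]
        exact continuousOn_empty _
  | succ n ih =>
    rintro p ⟨p', hp', ⟨⟨f1, g1, hf1, hg1, hpe⟩, _⟩⟩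
    have hs1 : SolvL 2 f1 := SolvL.of_contWRed hf1.contWRed SolvL_LPO
    have hs2 : SolvL (2 ^ n) g1 := SolvL.of_contWRed hg1.contWRed (ih hp')
    have hs3 : SolvL (2 * 2 ^ n) (pcomp f1 g1) := SolvL.pcompL hs1 hs2
    have he : 2 * 2 ^ n = 2 ^ (n + 1) := by rw [pow_succ]; ring
    rw [he] at hs3
    exact SolvL.of_contWRed hpe.1.contWRed hs3

end SolvL
section LowerBound

lemma Gm_not_solv {m ℓ : ℕ} (h : SolvL ℓ (Gm m)) : m < ℓ := by
  classical
  obtain ⟨F, C, hF, hC0, hCa, hCm, hCrc, hFc⟩ := h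
  have hDom : Dom (Gm m) = Set.univ := Dom_Gm m
  have hFval : ∀ x, F x = cseq (val m x) := by
    intro x
    have := hF x (by rw [hDom]; trivial)
    exact this
  rcases Nat.eq_zero_or_pos ℓ with h0 | hpos
  · exfalso
    rw [h0] at hCm
    rw [hCm, hDom] at hC0
    exact absurd (hC0.symm ▸ Set.mem_univ (cseq 0) : cseq 0 ∈ (∅ : Set Baire))
      (Set.notMem_empty _)
  have hex : ∀ x : Baire, ∃ k, x ∉ C (k + 1) := by
    intro x
    refine ⟨ℓ - 1, ?_⟩
    rw [show ℓ - 1 + 1 = ℓ by omega, hCm]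
    exact Set.notMem_empty x
  set jdx : Baire → ℕ := fun x => Nat.find (hex x) with hjdx
  have hnotin : ∀ x, x ∉ C (jdx x + 1) := fun x => Nat.find_spec (hex x)
  have hin : ∀ x, x ∈ C (jdx x) := by
    intro x
    rcases Nat.eq_zero_or_pos (jdx x) with h0 | hpos'
    · rw [h0, hC0, hDom]; trivial
    · have h1 := Nat.find_min (hex x) (show jdx x - 1 < jdx x by omega)
      rw [not_not, show jdx x - 1 + 1 = jdx x by omega] at h1
      exact h1
  have hjle : ∀ x, jdx x ≤ ℓ - 1 := by
    intro x
    apply Nat.find_le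
    rw [show ℓ - 1 + 1 = ℓ by omega, hCm]
    exact Set.notMem_empty x
  have descent : ∀ x, val m x < m → ∃ y, val m y = val m x + 1 ∧ jdx y < jdx x := by
    intro x hvx
    set j := jdx x with hj
    have hx_piece : x ∈ C j \ C (j + 1) := ⟨hin x, hnotin x⟩
    have hcwa : ContinuousWithinAt F (C j \ C (j + 1)) x := hFc j x hx_piece
    have hcwa0 : ContinuousWithinAt (fun y => F y 0) (C j \ C (j + 1)) x :=
      ((continuous_apply 0).continuousAt).comp_continuousWithinAt hcwa
    have hmem : (fun y => F y 0) ⁻¹' {F x 0} ∈ nhdsWithin x (C j \ C (j + 1)) :=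
      hcwa0 ((isOpen_discrete _).mem_nhds rfl)
    rw [mem_nhdsWithin] at hmem
    obtain ⟨U, hUopen, hxU, hUsub⟩ := hmem
    obtain ⟨N1, hN1⟩ := exists_cyl_subset (hUopen.mem_nhds hxU)
    have hncl : x ∉ closure (C (j + 1)) := by
      intro hc
      exact hnotin x (hCrc (j + 1) x (by rw [hDom]; trivial) hc)
    obtain ⟨N2, hN2⟩ := exists_cyl_subset ((isClosed_closure).isOpen_compl.mem_nhds hncl)
    obtain ⟨y, hyagree, hyval⟩ := val_approx hvx (max N1 N2)
    have hyC1 : y ∉ C (j + 1) := by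
      intro hc
      have h1 : y ∈ closure (C (j + 1)) := subset_closure hc
      have h2 : y ∈ cyl x N2 := fun i hi => hyagree i (by omega)
      exact hN2 h2 h1
    have hjy_le : jdx y ≤ j := Nat.find_le hyC1
    have hjy_ne : jdx y ≠ j := by
      intro he
      have hy_piece : y ∈ C j \ C (j + 1) := ⟨he ▸ hin y, hyC1⟩
      have hyU : y ∈ U := hN1 (fun i hi => hyagree i (by omega))
      have h3 : F y 0 = F x 0 := hUsub ⟨hyU, hy_piece⟩
      rw [hFval x, hFval y, cseq_apply, cseq_apply] at h3
      omega
    exact ⟨y, hyval, by omega⟩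
  have main : ∀ t, t ≤ m → ∃ x, val m x = t ∧ t + jdx x ≤ ℓ - 1 := by
    intro t
    induction t with
    | zero =>
      intro _
      exact ⟨cseq 1, val_cseq_one m, by have := hjle (cseq 1); omega⟩
    | succ t ih =>
      intro ht
      obtain ⟨x, hvx, hx⟩ := ih (by omega)
      obtain ⟨y, hyval, hylt⟩ := descent x (by omega)
      exact ⟨y, by rw [hyval, hvx], by omega⟩
  obtain ⟨x, _, hfin⟩ := main m (le_refl m)
  omega

end LowerBound
/-- For every `n`, `LPO^[n] <_W LPO^[n+1]`, and likewise `LPO^[n] <*_W LPO^[n+1]`. -/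
theorem lpo_iter_strict (n : ℕ) (p q : Problem)
    (hp : IsIter LPO n p) (hq : IsIter LPO (n + 1) q) :
    (WRed p q ∧ ¬ WRed q p) ∧ (ContWRed p q ∧ ¬ ContWRed q p) := by
  have hpos : WRed p q := iter_le hp hq
  have hneg : ¬ ContWRed q p := by
    intro hcw
    have hU : WRed (Gm (2 ^ (n + 1) - 1)) q := U_lemma hq
    have s1 : SolvL (2 ^ n) p := iter_solv hp
    have s2 : SolvL (2 ^ n) q := SolvL.of_contWRed hcw s1
    have s3 : SolvL (2 ^ n) (Gm (2 ^ (n + 1) - 1)) := SolvL.of_contWRed hU.contWRed s2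
    have hlt := Gm_not_solv s3
    have h1 := Nat.one_le_two_pow (n := n)
    rw [pow_succ] at hlt
    omega
  exact ⟨⟨hpos, fun h => hneg h.contWRed⟩, hpos.contWRed, hneg⟩
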